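/- For 0 ≤ k ≤ n, r ≥ 0, and any ring element t, G_{a,b}(n,k;r) = Σ_{j=k}^{n} G_{a,t}(n,j;r) · G_{−t,b}(j,k;r). -/
import Mathlib

open Finset

/-- The generalized r-Lah numbers `G_{a,b}(n,k;r)`. -/
def genLah {R : Type*} [CommRing R] (a b : R) (r : ℕ) : ℕ → ℕ → R
  | 0, 0 => 1
  | 0, _ + 1 => 0
  | n + 1, 0 => (a * ((n : R) + (r : R)) + b * (r : R)) * genLah a b r n 0
  | n + 1, k + 1 => genLah a b r n k +
      (a * (n : R) + b * ((k : R) + 1) + (a + b) * (r : R)) * genLah a b r n (k + 1)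

lemma genLah_eq_zero {R : Type*} [CommRing R] (a b : R) (r : ℕ) :
    ∀ n k, n < k → genLah a b r n k = 0 := by
  intro n
  induction n with
  | zero =>
    intro k hk
    match k, hk with
    | k + 1, _ => rfl
  | succ n ih =>
    intro k hk
    match k, hk with
    | k + 1, hk =>
      show genLah a b r n k + _ * genLah a b r n (k + 1) = 0
      rw [ih k (by omega), ih (k + 1) (by omega)]
      ring

lemma genLah_conv_range {R : Type*} [CommRing R] (a b t : R) (r : ℕ) :
    ∀ n k, genLah a b r n k
      = ∑ j ∈ range (n + 1), genLah a t r n j * genLah (-t) b r j k := by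
  intro n
  induction n with
  | zero =>
    intro k
    rw [Finset.sum_range_one]
    cases k with
    | zero => show (1 : R) = 1 * 1; ring
    | succ m => show (0 : R) = 1 * 0; ring
  | succ n ih =>
    intro k
    have step1 : ∑ j ∈ range (n + 2), genLah a t r (n + 1) j * genLah (-t) b r j k
        = ∑ j ∈ range (n + 1), genLah a t r n j * genLah (-t) b r (j + 1) k
          + ∑ j ∈ range (n + 2),
              (a * (n : R) + t * (j : R) + (a + t) * (r : R))
                * (genLah a t r n j * genLah (-t) b r j k) := by
      rw [Finset.sum_range_succ' (fun j => genLah a t r (n + 1) j * genLah (-t) b r j k) (n + 1),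
        Finset.sum_range_succ' (fun j => (a * (n : R) + t * (j : R) + (a + t) * (r : R))
          * (genLah a t r n j * genLah (-t) b r j k)) (n + 1),
        ← add_assoc, ← Finset.sum_add_distrib]
      congr 1
      · refine Finset.sum_congr rfl fun i _ => ?_
        show (genLah a t r n i
            + (a * (n : R) + t * ((i : R) + 1) + (a + t) * (r : R)) * genLah a t r n (i + 1))
            * genLah (-t) b r (i + 1) k = _
        push_cast
        ring
      · show (a * ((n : R) + (r : R)) + t * (r : R)) * genLah a t r n 0 * genLah (-t) b r 0 k = _
        push_cast
        ring
    have hdrop : ∑ j ∈ range (n + 2),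
          (a * (n : R) + t * (j : R) + (a + t) * (r : R))
            * (genLah a t r n j * genLah (-t) b r j k)
        = ∑ j ∈ range (n + 1),
            (a * (n : R) + t * (j : R) + (a + t) * (r : R))
              * (genLah a t r n j * genLah (-t) b r j k) := by
      rw [Finset.sum_range_succ, genLah_eq_zero a t r n (n + 1) (by omega)]
      ring
    rw [step1, hdrop]
    cases k with
    | zero =>
      have hg : ∀ j ∈ range (n + 1), genLah a t r n j * genLah (-t) b r (j + 1) 0
          = genLah a t r n j * ((-t * ((j : R) + (r : R)) + b * (r : R)) * genLah (-t) b r j 0) :=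
        fun j _ => rfl
      rw [Finset.sum_congr rfl hg, ← Finset.sum_add_distrib]
      show (a * ((n : R) + (r : R)) + b * (r : R)) * genLah a b r n 0 = _
      rw [ih 0, Finset.mul_sum]
      refine Finset.sum_congr rfl fun j _ => ?_
      ring
    | succ m =>
      have hg : ∀ j ∈ range (n + 1), genLah a t r n j * genLah (-t) b r (j + 1) (m + 1)
          = genLah a t r n j * (genLah (-t) b r j m
              + (-t * (j : R) + b * ((m : R) + 1) + (-t + b) * (r : R))
                * genLah (-t) b r j (m + 1)) :=
        fun j _ => rfl
      rw [Finset.sum_congr rfl hg, ← Finset.sum_add_distrib]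
      show genLah a b r n m
          + (a * (n : R) + b * ((m : R) + 1) + (a + b) * (r : R)) * genLah a b r n (m + 1) = _
      rw [ih m, ih (m + 1), Finset.mul_sum, ← Finset.sum_add_distrib]
      refine Finset.sum_congr rfl fun j _ => ?_
      ring

theorem genLah_param_convolution {R : Type*} [CommRing R] (a b t : R) (r n k : ℕ)
    (hkn : k ≤ n) :
    genLah a b r n k = ∑ j ∈ Icc k n, genLah a t r n j * genLah (-t) b r j k := by
  rw [genLah_conv_range a b t r n k]
  refine (Finset.sum_subset ?_ ?_).symm
  · intro j hj
    simp only [Finset.mem_Icc] at hj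
    simp only [Finset.mem_range]
    omega
  · intro j hj hnj
    simp only [Finset.mem_range] at hj
    simp only [Finset.mem_Icc, not_and, not_le] at hnj
    have hjk : j < k := by
      by_contra h
      exact absurd (hnj (by omega)) (by omega)
    rw [genLah_eq_zero (-t) b r j k hjk, mul_zero]
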